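/- arXiv:1810.10048 — 2 statements merged into one kernel-verified Lean document; each statement's English description precedes it below -/
import Mathlib

section
/- Let η > 0, let w be a lower semicontinuous viscosity supersolution of the equation min{∂_t u - ½ ∂²_{xx} u, ∂_s(u - U)} = 0 on int^p(Z) with boundary condition u = U(0,·) on ∂^p Z, and let w¹(s,t,x) := U(0,x) + η(1+s+t). Then for every μ ∈ (0,1), the convex combination w^μ := (1-μ)w + μ w¹ is a μη-strict viscosity supersolution of the same equation. -/
open MeasureTheory ProbabilityTheory Filter Set Topology

noncomputable section

namespace RootSEP

/-- The potential function `U(s,x) := -∫ |x-y| μ_s(dy)` of a family of marginals. -/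
def potential (μ : ℝ → Measure ℝ) (s x : ℝ) : ℝ := -∫ y, |x - y| ∂(μ s)

/-- The partial derivative `∂_s U(s,x)` of the potential function (the derivative in
`s` within `[0,1]`). -/
def dsU (μ : ℝ → Measure ℝ) (s x : ℝ) : ℝ :=
  derivWithin (fun r => potential μ r x) (Icc 0 1) s

/-- Standing assumptions on the family of marginals `μ = (μ_s)_{s ∈ [0,1]}`:
each `μ_s` is a centred probability measure with finite first moment, `s ↦ μ_s` is
càdlàg for the weak convergence topology, and the family is nondecreasing in convex order. -/
structure IsPeacock (μ : ℝ → Measure ℝ) : Prop where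
  prob : ∀ s ∈ Icc (0:ℝ) 1, IsProbabilityMeasure (μ s)
  first_moment : ∀ s ∈ Icc (0:ℝ) 1, Integrable (fun y => y) (μ s)
  centred : ∀ s ∈ Icc (0:ℝ) 1, (∫ y, y ∂(μ s)) = 0
  right_cont : ∀ s ∈ Ico (0:ℝ) 1, ∀ g : BoundedContinuousFunction ℝ ℝ,
    ContinuousWithinAt (fun r => ∫ y, g y ∂(μ r)) (Icc s 1) s
  left_lim : ∀ s ∈ Ioc (0:ℝ) 1, ∃ ν : Measure ℝ,
    ∀ g : BoundedContinuousFunction ℝ ℝ,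
      Tendsto (fun r => ∫ y, g y ∂(μ r)) (nhdsWithin s (Ico 0 s)) (𝓝 (∫ y, g y ∂ν))
  convex_order : ∀ φ : ℝ → ℝ, ConvexOn ℝ univ φ → ∀ s t : ℝ,
    s ∈ Icc (0:ℝ) 1 → t ∈ Icc (0:ℝ) 1 → s ≤ t →
    Integrable φ (μ s) → Integrable φ (μ t) →
    (∫ y, φ y ∂(μ s)) ≤ ∫ y, φ y ∂(μ t)

/-- Assumption (U): `∂_s U` exists and is continuous on `[0,1] × ℝ`, and
`x ↦ sup_{s ∈ [0,1]} |∂_s U(s,x)|` has at most polynomial growth. -/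
structure AssumptionU (μ : ℝ → Measure ℝ) : Prop where
  diff : ∀ s ∈ Icc (0:ℝ) 1, ∀ x : ℝ,
    DifferentiableWithinAt ℝ (fun r => potential μ r x) (Icc 0 1) s
  cont : ContinuousOn (fun p : ℝ × ℝ => dsU μ p.1 p.2) (Icc (0:ℝ) 1 ×ˢ univ)
  growth : ∃ C : ℝ, 0 < C ∧ ∃ p : ℕ, ∀ x : ℝ, ∀ s ∈ Icc (0:ℝ) 1, |dsU μ s x| ≤ C * (1 + |x| ^ p)

/-- `B` is a Brownian motion with initial law `μ₀` on the filtered probability space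
`(Ω, F, P)`: it has `μ₀` as initial law, is adapted with continuous paths on `[0,∞)`,
and has increments independent of the past with centred Gaussian law. -/
structure IsBrownianMotionFrom {Ω : Type*} {mΩ : MeasurableSpace Ω} (μ0 : Measure ℝ)
    (P : Measure Ω) (F : Filtration ℝ mΩ) (B : ℝ → Ω → ℝ) : Prop where
  meas : ∀ t : ℝ, StronglyMeasurable (B t)
  init : P.map (B 0) = μ0
  adapted : Adapted F B
  cont_paths : ∀ ω, ContinuousOn (fun t => B t ω) (Ici 0)
  indep_increments : ∀ s t : ℝ, 0 ≤ s → s ≤ t →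
    Indep (MeasurableSpace.comap (fun ω => B t ω - B s ω) (borel ℝ)) (F s) P
  gaussian_increments : ∀ s t : ℝ, 0 ≤ s → s ≤ t →
    P.map (fun ω => B t ω - B s ω) = gaussianReal 0 (Real.toNNReal (t - s))

/-- A stopping rule: a filtered probability space carrying a Brownian motion `B` with
initial law `μ₀` and a càdlàg nondecreasing family `(τ_s)_{s ∈ [0,1]}` of stopping
times with `τ_0 = 0`. -/
structure StoppingRule where
  Ω : Type
  mΩ : MeasurableSpace Ω
  F : Filtration ℝ mΩ
  P : Measure Ω
  prob : IsProbabilityMeasure P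
  B : ℝ → Ω → ℝ
  μ0 : Measure ℝ
  bm : IsBrownianMotionFrom μ0 P F B
  τ : ℝ → Ω → ℝ
  τ_nonneg : ∀ s ω, 0 ≤ τ s ω
  τ_zero : ∀ ω, τ 0 ω = 0
  τ_mono : ∀ ω, MonotoneOn (fun s => τ s ω) (Icc 0 1)
  τ_rc : ∀ ω, ∀ s ∈ Ico (0:ℝ) 1, ContinuousWithinAt (fun r => τ r ω) (Icc s 1) s
  τ_stop : ∀ s ∈ Icc (0:ℝ) 1, IsStoppingTime F (fun ω => ((τ s ω : ℝ) : WithTop ℝ))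

instance (α : StoppingRule) : MeasurableSpace α.Ω := α.mΩ

/-- A stopping rule is a `μ`-embedding if its initial law is `μ_0`, the stopped process
`(B_{t ∧ τ_1})_{t ≥ 0}` is uniformly integrable and `B_{τ_s} ∼ μ_s` for all `s ∈ [0,1]`. -/
def IsEmbedding (μ : ℝ → Measure ℝ) (α : StoppingRule) : Prop :=
  α.μ0 = μ 0 ∧
  UniformIntegrable (fun (t : NNReal) ω => α.B (min (t : ℝ) (α.τ 1 ω)) ω) 1 α.P ∧
  ∀ s ∈ Icc (0:ℝ) 1, α.P.map (fun ω => α.B (α.τ s ω) ω) = μ s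

/-- The value function `ũ(s,t,x)` defined from the optimal stopping problem over the
class `A_t^0` of stopping rules with `τ_1 ≤ t` and initial law `δ_0`. -/
def utilde (μ : ℝ → Measure ℝ) (s t x : ℝ) : ℝ :=
  sSup {r : ℝ | ∃ α : StoppingRule, α.μ0 = Measure.dirac 0 ∧ (∀ ω, α.τ 1 ω ≤ t) ∧
    r = ∫ ω, (potential μ 0 (x + α.B (α.τ s ω) ω)
        + ∫ k in (0:ℝ)..s,
            (if α.τ k ω < t then dsU μ (s - k) (x + α.B (α.τ k ω) ω) else 0)) ∂α.P}

/-- clamp to `[0,1]` -/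
def clamp (x : ℝ) : ℝ := max 0 (min 1 x)

lemma clamp_mem (x : ℝ) : clamp x ∈ Icc (0:ℝ) 1 :=
  ⟨le_max_left _ _, max_le (by norm_num) (min_le_left _ _)⟩

lemma clamp_mono : Monotone clamp :=
  fun _ _ h => max_le_max le_rfl (min_le_min le_rfl h)

lemma clamp_of_nonpos {x : ℝ} (hx : x ≤ 0) : clamp x = 0 := by
  have h1 : min 1 x = x := min_eq_right (by linarith)
  rw [clamp, h1, max_eq_left hx]

lemma clamp_of_mem {x : ℝ} (hx : x ∈ Icc (0:ℝ) 1) : clamp x = x := by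
  rw [clamp, min_eq_right hx.2, max_eq_right hx.1]

lemma clamp_of_ge_one {x : ℝ} (hx : (1:ℝ) ≤ x) : clamp x = 1 := by
  rw [clamp, min_eq_left hx]
  exact max_eq_right (by norm_num)

lemma continuous_clamp : Continuous clamp :=
  continuous_const.max (continuous_const.min continuous_id)


/-- The time-space domain `Z = [0,1] × ℝ_+ × ℝ`. -/
def Zset : Set (ℝ × ℝ × ℝ) := Icc (0:ℝ) 1 ×ˢ (Ici (0:ℝ) ×ˢ (univ : Set ℝ))

/-- The parabolic boundary `∂^p Z = {(s,t,x) ∈ Z : s ∧ t = 0}`. -/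
def pBoundary : Set (ℝ × ℝ × ℝ) := {z ∈ Zset | min z.1 z.2.1 = 0}

/-- The parabolic interior `int^p(Z) = Z \ ∂^p Z`. -/
def pInterior : Set (ℝ × ℝ × ℝ) := Zset \ pBoundary

/-- Partial derivative in the `s` variable. -/
def pderivS (φ : ℝ × ℝ × ℝ → ℝ) (z : ℝ × ℝ × ℝ) : ℝ :=
  deriv (fun s => φ (s, z.2.1, z.2.2)) z.1

/-- Partial derivative in the `t` variable. -/
def pderivT (φ : ℝ × ℝ × ℝ → ℝ) (z : ℝ × ℝ × ℝ) : ℝ :=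
  deriv (fun t => φ (z.1, t, z.2.2)) z.2.1

/-- Second partial derivative in the `x` variable. -/
def pderivXX (φ : ℝ × ℝ × ℝ → ℝ) (z : ℝ × ℝ × ℝ) : ℝ :=
  deriv (deriv (fun x => φ (z.1, z.2.1, x))) z.2.2

/-- The operator `F(Dφ, D²φ) = min{∂_t φ - ½ ∂²_xx φ, ∂_s φ - ∂_s U}`. -/
def Fop (μ : ℝ → Measure ℝ) (φ : ℝ × ℝ × ℝ → ℝ) (z : ℝ × ℝ × ℝ) : ℝ :=
  min (pderivT φ z - (1/2) * pderivXX φ z) (pderivS φ z - dsU μ z.1 z.2.2)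

/-- Viscosity subsolution of `min{∂_t u - ½∂²_xx u, ∂_s (u - U)} = 0` on `int^p Z`
with boundary condition `u ≤ U(0,·)` on `∂^p Z`. -/
def IsViscositySubsolution (μ : ℝ → Measure ℝ) (v : ℝ × ℝ × ℝ → ℝ) : Prop :=
  UpperSemicontinuousOn v Zset ∧
  (∀ z ∈ pBoundary, v z ≤ potential μ 0 z.2.2) ∧
  ∀ z0 ∈ pInterior, ∀ φ : ℝ × ℝ × ℝ → ℝ, ContDiff ℝ 2 φ →
    (∀ z ∈ Zset, v z - φ z ≤ v z0 - φ z0) → Fop μ φ z0 ≤ 0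

/-- `η`-strict viscosity supersolution: `w ≥ η + U(0,·)` on `∂^p Z` and
`F(Dφ, D²φ)(z₀) ≥ η` at interior test points. -/
def IsStrictViscositySupersolution (μ : ℝ → Measure ℝ) (η : ℝ) (w : ℝ × ℝ × ℝ → ℝ) : Prop :=
  LowerSemicontinuousOn w Zset ∧
  (∀ z ∈ pBoundary, η + potential μ 0 z.2.2 ≤ w z) ∧
  ∀ z0 ∈ pInterior, ∀ φ : ℝ × ℝ × ℝ → ℝ, ContDiff ℝ 2 φ →
    (∀ z ∈ Zset, w z0 - φ z0 ≤ w z - φ z) → η ≤ Fop μ φ z0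

/-- Viscosity supersolution. -/
def IsViscositySupersolution (μ : ℝ → Measure ℝ) (w : ℝ × ℝ × ℝ → ℝ) : Prop :=
  IsStrictViscositySupersolution μ 0 w

/-- A continuous (on `Z`) viscosity solution is both a subsolution and a supersolution. -/
def IsViscositySolution (μ : ℝ → Measure ℝ) (u : ℝ × ℝ × ℝ → ℝ) : Prop :=
  ContinuousOn u Zset ∧ IsViscositySubsolution μ u ∧ IsViscositySupersolution μ u




/-! ### Auxiliary lemmas -/

lemma measurable_realSign : Measurable Real.sign := by
  unfold Real.sign
  exact Measurable.ite (measurableSet_lt measurable_id measurable_const) measurable_const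
    (Measurable.ite (measurableSet_lt measurable_const measurable_id) measurable_const
      measurable_const)

lemma abs_realSign_le (z : ℝ) : |Real.sign z| ≤ 1 := by
  rcases Real.sign_apply_eq z with h | h | h <;> rw [h] <;> norm_num

lemma realSign_mul_self (z : ℝ) : Real.sign z * z = |z| := by
  rcases lt_trichotomy z 0 with h | h | h
  · rw [Real.sign_of_neg h, abs_of_neg h]; ring
  · simp [h]
  · rw [Real.sign_of_pos h, abs_of_pos h]; ring

lemma integrable_abs_sub {ν : Measure ℝ} [IsProbabilityMeasure ν]
    (hm : Integrable (fun y => y) ν) (x : ℝ) :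
    Integrable (fun y => |x - y|) ν := by
  have hb : Integrable (fun y => |x| + |y|) ν := (integrable_const _).add hm.abs
  refine hb.mono' ((continuous_const.sub continuous_id).abs.aestronglyMeasurable) ?_
  filter_upwards with y
  rw [Real.norm_eq_abs, abs_abs, sub_eq_add_neg]
  simpa using abs_add_le x (-y)

lemma integrable_sign {ν : Measure ℝ} [IsProbabilityMeasure ν] (x0 : ℝ) :
    Integrable (fun y => Real.sign (x0 - y)) ν := by
  refine (integrable_const (1:ℝ)).mono'
    ((measurable_realSign.comp (measurable_const.sub measurable_id)).aestronglyMeasurable) ?_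
  filter_upwards with y
  rw [Real.norm_eq_abs]
  simpa using abs_realSign_le (x0 - y)

lemma potential_subgrad (μ : ℝ → Measure ℝ) (hprob : IsProbabilityMeasure (μ 0))
    (hm : Integrable (fun y => y) (μ 0)) (x0 : ℝ) :
    ∃ p : ℝ, ∀ x : ℝ, potential μ 0 x ≤ potential μ 0 x0 + p * (x - x0) := by
  refine ⟨-∫ y, Real.sign (x0 - y) ∂(μ 0), fun x => ?_⟩
  have key : ∀ y : ℝ, |x0 - y| + Real.sign (x0 - y) * (x - x0) ≤ |x - y| := by
    intro y
    have h1 : Real.sign (x0 - y) * (x0 - y) = |x0 - y| := realSign_mul_self _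
    have h2 : Real.sign (x0 - y) * (x - y) ≤ |x - y| := by
      calc Real.sign (x0 - y) * (x - y) ≤ |Real.sign (x0 - y) * (x - y)| := le_abs_self _
        _ = |Real.sign (x0 - y)| * |x - y| := abs_mul _ _
        _ ≤ 1 * |x - y| :=
            mul_le_mul_of_nonneg_right (abs_realSign_le _) (abs_nonneg _)
        _ = |x - y| := one_mul _
    nlinarith [h2, h1]
  have hint : Integrable (fun y => |x0 - y| + Real.sign (x0 - y) * (x - x0)) (μ 0) :=
    (integrable_abs_sub hm x0).add ((integrable_sign x0).mul_const _)
  have hle : (∫ y, (|x0 - y| + Real.sign (x0 - y) * (x - x0)) ∂(μ 0)) ≤ ∫ y, |x - y| ∂(μ 0) :=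
    integral_mono hint (integrable_abs_sub hm x) key
  rw [integral_add (integrable_abs_sub hm x0) ((integrable_sign x0).mul_const _),
    integral_mul_const] at hle
  simp only [potential]
  linarith

lemma potential_cont (μ : ℝ → Measure ℝ) (hprob : IsProbabilityMeasure (μ 0))
    (hm : Integrable (fun y => y) (μ 0)) :
    Continuous (fun x => potential μ 0 x) := by
  have hlip : LipschitzWith 1 (fun x => potential μ 0 x) := by
    refine LipschitzWith.of_dist_le_mul fun x x' => ?_
    rw [Real.dist_eq, Real.dist_eq]
    have e : potential μ 0 x - potential μ 0 x' = ∫ y, (|x' - y| - |x - y|) ∂(μ 0) := by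
      rw [integral_sub (integrable_abs_sub hm x') (integrable_abs_sub hm x)]
      simp only [potential]; ring
    rw [e]
    rw [NNReal.coe_one, one_mul]
    calc |∫ y, (|x' - y| - |x - y|) ∂(μ 0)| ≤ ∫ y, |(|x' - y| - |x - y|)| ∂(μ 0) := by
          simpa [Real.norm_eq_abs] using
            norm_integral_le_integral_norm (μ := μ 0) (fun y => |x' - y| - |x - y|)
      _ ≤ ∫ _y, |x - x'| ∂(μ 0) := by
          refine integral_mono (((integrable_abs_sub hm x').sub (integrable_abs_sub hm x)).abs)
            (integrable_const _) fun y => ?_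
          have h := abs_abs_sub_abs_le_abs_sub (x' - y) (x - y)
          have e2 : x' - y - (x - y) = x' - x := by ring
          rw [e2] at h
          simpa [abs_sub_comm] using h
      _ = |x - x'| := by simp
  exact hlip.continuous

lemma convexOn_abs_sub (x : ℝ) : ConvexOn ℝ univ (fun y => |x - y|) := by
  refine ⟨convex_univ, fun a _ b _ la lb hla hlb hab => ?_⟩
  simp only [smul_eq_mul]
  have e : x - (la * a + lb * b) = la * (x - a) + lb * (x - b) := by
    linear_combination x * hab.symm
  calc |x - (la * a + lb * b)| = |la * (x - a) + lb * (x - b)| := by rw [e]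
    _ ≤ |la * (x - a)| + |lb * (x - b)| := abs_add_le _ _
    _ = la * |x - a| + lb * |x - b| := by
        rw [abs_mul, abs_mul, abs_of_nonneg hla, abs_of_nonneg hlb]

lemma potential_anti (μ : ℝ → Measure ℝ) (hμ : IsPeacock μ) (x : ℝ) :
    AntitoneOn (fun s => potential μ s x) (Icc 0 1) := by
  intro s hs t ht hst
  haveI := hμ.prob s hs
  haveI := hμ.prob t ht
  have hints : Integrable (fun y => |x - y|) (μ s) :=
    integrable_abs_sub (hμ.first_moment s hs) x
  have hintt : Integrable (fun y => |x - y|) (μ t) :=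
    integrable_abs_sub (hμ.first_moment t ht) x
  have h := hμ.convex_order (fun y => |x - y|) (convexOn_abs_sub x) s t hs ht hst hints hintt
  simp only [potential]
  linarith

lemma derivWithin_nonpos_of_antitoneOn (f : ℝ → ℝ) (hf : AntitoneOn f (Icc 0 1)) {s : ℝ}
    (hs : s ∈ Icc (0:ℝ) 1) (hd : DifferentiableWithinAt ℝ f (Icc 0 1) s) :
    derivWithin f (Icc 0 1) s ≤ 0 := by
  have hder := hd.hasDerivWithinAt
  rw [hasDerivWithinAt_iff_tendsto_slope] at hder
  have hne : (𝓝[Icc (0:ℝ) 1 \ {s}] s).NeBot := by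
    rcases lt_or_eq_of_le hs.2 with h1 | h1
    · have hsub : Ioc s 1 ⊆ Icc (0:ℝ) 1 \ {s} := fun r hr =>
        ⟨⟨le_trans hs.1 hr.1.le, hr.2⟩, ne_of_gt hr.1⟩
      have h2 : (𝓝[Ioc s 1] s).NeBot := by
        rw [nhdsWithin_Ioc_eq_nhdsGT h1]; infer_instance
      exact h2.mono (nhdsWithin_mono _ hsub)
    · subst h1
      have hsub : Ico (0:ℝ) 1 ⊆ Icc (0:ℝ) 1 \ {1} := fun r hr =>
        ⟨⟨hr.1, hr.2.le⟩, ne_of_lt hr.2⟩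
      have h2 : (𝓝[Ico (0:ℝ) 1] 1).NeBot := by
        rw [nhdsWithin_Ico_eq_nhdsLT (by norm_num : (0:ℝ) < 1)]
        infer_instance
      exact h2.mono (nhdsWithin_mono _ hsub)
  refine le_of_tendsto hder ?_
  filter_upwards [self_mem_nhdsWithin] with r hr
  rw [slope_def_field]
  have hrs : r ≠ s := fun h => hr.2 (by simp [h])
  rcases hrs.lt_or_gt with h | h
  · exact div_nonpos_of_nonneg_of_nonpos (by linarith [hf hr.1 hs h.le]) (by linarith)
  · exact div_nonpos_of_nonpos_of_nonneg (by linarith [hf hs hr.1 h.le]) (by linarith)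

lemma dsU_nonpos (μ : ℝ → Measure ℝ) (hμ : IsPeacock μ) (hU : AssumptionU μ)
    {s : ℝ} (hs : s ∈ Icc (0:ℝ) 1) (x : ℝ) : dsU μ s x ≤ 0 :=
  derivWithin_nonpos_of_antitoneOn _ (potential_anti μ hμ x) hs (hU.diff s hs x)


/-- the convex combination `w^λ = (1-λ) w + λ w¹` of a supersolution `w`
with `w¹ = U(0,·) + η(1+s+t)` is a `λη`-strict viscosity supersolution. -/
theorem convex_combination_strict_supersolution
    (μ : ℝ → Measure ℝ) (hμ : IsPeacock μ) (hU : AssumptionU μ)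
    (η : ℝ) (hη : 0 < η) (w : ℝ × ℝ × ℝ → ℝ)
    (hw : IsViscositySupersolution μ w)
    (lam : ℝ) (hlam : lam ∈ Ioo (0:ℝ) 1) :
    IsStrictViscositySupersolution μ (lam * η)
      (fun z : ℝ × ℝ × ℝ =>
        (1 - lam) * w z + lam * (potential μ 0 z.2.2 + η * (1 + z.1 + z.2.1))) := by
  obtain ⟨hlsc, hbd, hvs⟩ := hw
  have h01 : (0:ℝ) ∈ Icc (0:ℝ) 1 := ⟨le_rfl, zero_le_one⟩
  have hprob : IsProbabilityMeasure (μ 0) := hμ.prob 0 h01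
  have hm : Integrable (fun y => y) (μ 0) := hμ.first_moment 0 h01
  have hcontU : Continuous (fun x => potential μ 0 x) := potential_cont μ hprob hm
  have h1l : (0:ℝ) < 1 - lam := by linarith [hlam.2]
  refine ⟨?_, ?_, ?_⟩
  · -- lower semicontinuity
    intro z hz
    have h1 : LowerSemicontinuousWithinAt (fun z : ℝ × ℝ × ℝ => (1 - lam) * w z) Zset z := by
      intro y hy
      simp only at hy
      have hy' : y / (1 - lam) < w z := (div_lt_iff₀ h1l).mpr (by linarith [hy])
      filter_upwards [hlsc z hz _ hy'] with z' hz'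
      calc y = (1 - lam) * (y / (1 - lam)) := by field_simp
        _ < (1 - lam) * w z' := (mul_lt_mul_iff_right₀ h1l).mpr hz'
    have h2 : LowerSemicontinuousWithinAt
        (fun z : ℝ × ℝ × ℝ => lam * (potential μ 0 z.2.2 + η * (1 + z.1 + z.2.1))) Zset z := by
      have hc : Continuous fun z : ℝ × ℝ × ℝ =>
          lam * (potential μ 0 z.2.2 + η * (1 + z.1 + z.2.1)) :=
        continuous_const.mul ((hcontU.comp (continuous_snd.comp continuous_snd)).add
          (continuous_const.mul ((continuous_const.add continuous_fst).add
            (continuous_fst.comp continuous_snd))))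
      exact (hc.lowerSemicontinuous).lowerSemicontinuousWithinAt _ _
    exact h1.add h2
  · -- boundary condition
    intro z hz
    have hwz := hbd z hz
    rw [zero_add] at hwz
    have hzZ := hz.1
    have hs0 : (0:ℝ) ≤ z.1 := hzZ.1.1
    have ht0 : (0:ℝ) ≤ z.2.1 := hzZ.2.1
    have hw1 : (1 - lam) * potential μ 0 z.2.2 ≤ (1 - lam) * w z :=
      mul_le_mul_of_nonneg_left hwz h1l.le
    simp only
    nlinarith [mul_nonneg (mul_nonneg hlam.1.le hη.le) (add_nonneg hs0 ht0)]
  · -- interior test points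
    intro z0 hz0 φ hφ hmin
    have hz0Z : z0 ∈ Zset := hz0.1
    have hs0 : z0.1 ∈ Icc (0:ℝ) 1 := hz0Z.1
    obtain ⟨p, hp⟩ := potential_subgrad μ hprob hm z0.2.2
    set Ψ : ℝ × ℝ × ℝ → ℝ := fun z =>
      (φ z - lam * (potential μ 0 z0.2.2 + p * (z.2.2 - z0.2.2)
        + η * (1 + z.1 + z.2.1))) / (1 - lam) with hΨ
    have hne : (1:ℝ) - lam ≠ 0 := ne_of_gt h1l
    have hΨC2 : ContDiff ℝ 2 Ψ := by
      apply ContDiff.div_const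
      refine hφ.sub (contDiff_const.mul (ContDiff.add (ContDiff.add contDiff_const
        (contDiff_const.mul ((contDiff_snd.comp contDiff_snd).sub contDiff_const)))
        (contDiff_const.mul ((contDiff_const.add contDiff_fst).add
          (contDiff_fst.comp contDiff_snd)))))
    have heΨ : ∀ z : ℝ × ℝ × ℝ, (1 - lam) * Ψ z
        = φ z - lam * (potential μ 0 z0.2.2 + p * (z.2.2 - z0.2.2)
          + η * (1 + z.1 + z.2.1)) := by
      intro z; rw [hΨ]; field_simp
    have hΨmin : ∀ z ∈ Zset, w z0 - Ψ z0 ≤ w z - Ψ z := by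
      intro z hz
      have hm0 := hmin z hz
      simp only at hm0
      have hpz := hp z.2.2
      have hmul := mul_le_mul_of_nonneg_left hpz hlam.1.le
      have hkey : (1 - lam) * (w z0 - Ψ z0) ≤ (1 - lam) * (w z - Ψ z) := by
        rw [mul_sub, mul_sub, heΨ, heΨ]
        nlinarith [hm0, hmul]
      exact le_of_mul_le_mul_left hkey h1l
    have h0 := hvs z0 hz0 Ψ hΨC2 hΨmin
    -- compute the partial derivatives of Ψ at z0
    have hφdiff : Differentiable ℝ φ := hφ.differentiable (by norm_num)
    -- s derivative
    have hS : HasDerivAt (fun s => Ψ (s, z0.2.1, z0.2.2))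
        ((deriv (fun s => φ (s, z0.2.1, z0.2.2)) z0.1 - lam * η) / (1 - lam)) z0.1 := by
      have hgs : DifferentiableAt ℝ (fun s => φ (s, z0.2.1, z0.2.2)) z0.1 :=
        (hφdiff.comp (differentiable_id.prodMk (differentiable_const _))) z0.1
      have hg : HasDerivAt (fun s => φ (s, z0.2.1, z0.2.2))
          (deriv (fun s => φ (s, z0.2.1, z0.2.2)) z0.1) z0.1 := hgs.hasDerivAt
      have ha : HasDerivAt (fun s : ℝ => lam * (potential μ 0 z0.2.2
          + p * (z0.2.2 - z0.2.2) + η * (1 + s + z0.2.1))) (lam * η) z0.1 := by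
        have h : HasDerivAt (fun s : ℝ => lam * (potential μ 0 z0.2.2
            + p * (z0.2.2 - z0.2.2) + η * (1 + z0.2.1)) + lam * η * s) (lam * η) z0.1 := by
          simpa using ((hasDerivAt_id z0.1).const_mul (lam * η)).const_add
            (lam * (potential μ 0 z0.2.2 + p * (z0.2.2 - z0.2.2) + η * (1 + z0.2.1)))
        have e : (fun s : ℝ => lam * (potential μ 0 z0.2.2 + p * (z0.2.2 - z0.2.2)
              + η * (1 + z0.2.1)) + lam * η * s)
            = fun s : ℝ => lam * (potential μ 0 z0.2.2 + p * (z0.2.2 - z0.2.2)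
              + η * (1 + s + z0.2.1)) := by
          funext s; ring
        rw [e] at h; exact h
      exact (hg.sub ha).div_const _
    have hpS : pderivS Ψ z0 = (pderivS φ z0 - lam * η) / (1 - lam) := hS.deriv
    -- t derivative
    have hT : HasDerivAt (fun t => Ψ (z0.1, t, z0.2.2))
        ((deriv (fun t => φ (z0.1, t, z0.2.2)) z0.2.1 - lam * η) / (1 - lam)) z0.2.1 := by
      have hgs : DifferentiableAt ℝ (fun t => φ (z0.1, t, z0.2.2)) z0.2.1 :=
        (hφdiff.comp ((differentiable_const _).prodMk
          (differentiable_id.prodMk (differentiable_const _)))) z0.2.1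
      have hg : HasDerivAt (fun t => φ (z0.1, t, z0.2.2))
          (deriv (fun t => φ (z0.1, t, z0.2.2)) z0.2.1) z0.2.1 := hgs.hasDerivAt
      have ha : HasDerivAt (fun t : ℝ => lam * (potential μ 0 z0.2.2
          + p * (z0.2.2 - z0.2.2) + η * (1 + z0.1 + t))) (lam * η) z0.2.1 := by
        have h : HasDerivAt (fun t : ℝ => lam * (potential μ 0 z0.2.2
            + p * (z0.2.2 - z0.2.2) + η * (1 + z0.1)) + lam * η * t) (lam * η) z0.2.1 := by
          simpa using ((hasDerivAt_id z0.2.1).const_mul (lam * η)).const_add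
            (lam * (potential μ 0 z0.2.2 + p * (z0.2.2 - z0.2.2) + η * (1 + z0.1)))
        have e : (fun t : ℝ => lam * (potential μ 0 z0.2.2 + p * (z0.2.2 - z0.2.2)
              + η * (1 + z0.1)) + lam * η * t)
            = fun t : ℝ => lam * (potential μ 0 z0.2.2 + p * (z0.2.2 - z0.2.2)
              + η * (1 + z0.1 + t)) := by
          funext t; ring
        rw [e] at h; exact h
      exact (hg.sub ha).div_const _
    have hpT : pderivT Ψ z0 = (pderivT φ z0 - lam * η) / (1 - lam) := hT.deriv
    -- second x derivative
    have hhC2 : ContDiff ℝ 2 (fun x => φ (z0.1, z0.2.1, x)) :=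
      hφ.comp (contDiff_const.prodMk (contDiff_const.prodMk contDiff_id))
    have hhC2' : ContDiff ℝ ((1:ℕ∞) + 1) (fun x => φ (z0.1, z0.2.1, x)) := by
      convert hhC2 using 2
      norm_num
    have hd1 : ContDiff ℝ 1 (deriv (fun x => φ (z0.1, z0.2.1, x))) :=
      (contDiff_succ_iff_deriv.mp hhC2').2.2
    have hinner : deriv (fun x => Ψ (z0.1, z0.2.1, x))
        = fun x => (deriv (fun x => φ (z0.1, z0.2.1, x)) x - lam * p) / (1 - lam) := by
      funext x
      have hg : HasDerivAt (fun x => φ (z0.1, z0.2.1, x))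
          (deriv (fun x => φ (z0.1, z0.2.1, x)) x) x :=
        (hhC2.differentiable (by norm_num) x).hasDerivAt
      have ha : HasDerivAt (fun x : ℝ => lam * (potential μ 0 z0.2.2
          + p * (x - z0.2.2) + η * (1 + z0.1 + z0.2.1))) (lam * p) x := by
        have h : HasDerivAt (fun y : ℝ => lam * (potential μ 0 z0.2.2
            - p * z0.2.2 + η * (1 + z0.1 + z0.2.1)) + lam * p * y) (lam * p) x := by
          simpa using ((hasDerivAt_id x).const_mul (lam * p)).const_add
            (lam * (potential μ 0 z0.2.2 - p * z0.2.2 + η * (1 + z0.1 + z0.2.1)))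
        have e : (fun y : ℝ => lam * (potential μ 0 z0.2.2 - p * z0.2.2
              + η * (1 + z0.1 + z0.2.1)) + lam * p * y)
            = fun y : ℝ => lam * (potential μ 0 z0.2.2 + p * (y - z0.2.2)
              + η * (1 + z0.1 + z0.2.1)) := by
          funext y; ring
        rw [e] at h; exact h
      exact ((hg.sub ha).div_const _).deriv
    have hpXX : pderivXX Ψ z0 = pderivXX φ z0 / (1 - lam) := by
      show deriv (deriv (fun x => Ψ (z0.1, z0.2.1, x))) z0.2.2 = _
      rw [hinner]
      have hdd : HasDerivAt (deriv (fun x => φ (z0.1, z0.2.1, x)))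
          (deriv (deriv (fun x => φ (z0.1, z0.2.1, x))) z0.2.2) z0.2.2 :=
        ((hd1.differentiable one_ne_zero) z0.2.2).hasDerivAt
      exact ((hdd.sub_const (lam * p)).div_const (1 - lam)).deriv
    -- conclude
    rcases le_min_iff.mp h0 with ⟨hA, hB⟩
    rw [hpT, hpXX] at hA
    rw [hpS] at hB
    have hdsU : dsU μ z0.1 z0.2.2 ≤ 0 := dsU_nonpos μ hμ hU hs0 z0.2.2
    have eA : (pderivT φ z0 - lam * η) / (1 - lam) - 1 / 2 * (pderivXX φ z0 / (1 - lam))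
        = (pderivT φ z0 - lam * η - 1 / 2 * pderivXX φ z0) / (1 - lam) := by ring
    rw [eA] at hA
    have hA' : (0:ℝ) * (1 - lam) ≤ pderivT φ z0 - lam * η - 1 / 2 * pderivXX φ z0 :=
      (le_div_iff₀ h1l).mp hA
    have hB' : dsU μ z0.1 z0.2.2 * (1 - lam) ≤ pderivS φ z0 - lam * η :=
      (le_div_iff₀ h1l).mp (by linarith [hB])
    refine le_min ?_ ?_
    · nlinarith [hA']
    · nlinarith [hB', mul_nonneg hlam.1.le (neg_nonneg.mpr hdsU)]



end RootSEP
end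
end

section
/- Let (μ_s)_{s∈[0,1]} be a family of probability measures on ℝ with finite first moments which is nondecreasing in convex order. Then the map s ↦ μ_s is continuous for the weak convergence topology at all but at most countably many points s ∈ [0,1]. -/
open MeasureTheory Set Filter

noncomputable section

namespace ConvexOrderFamilyAux

/-- The "call" function `y ↦ (y - q)⁺`. -/
def pc (q y : ℝ) : ℝ := max (y - q) 0

lemma pc_nonneg (q y : ℝ) : 0 ≤ pc q y := le_max_right _ _

lemma pc_of_le {q y : ℝ} (h : y ≤ q) : pc q y = 0 := max_eq_right (by linarith)

lemma pc_of_ge {q y : ℝ} (h : q ≤ y) : pc q y = y - q := max_eq_left (by linarith)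

lemma pc_le (q y : ℝ) : pc q y ≤ |y| + |q| := by
  rcases le_total y q with h | h
  · rw [pc_of_le h]; positivity
  · rw [pc_of_ge h]
    have h1 := le_abs_self y; have h2 := neg_abs_le q
    linarith

lemma pc_anti {q q' : ℝ} (h : q ≤ q') (y : ℝ) : pc q' y ≤ pc q y :=
  max_le_max (by linarith) le_rfl

lemma pc_lip (q q' y : ℝ) : |pc q y - pc q' y| ≤ |q - q'| := by
  have h := abs_max_sub_max_le_abs (y - q) (y - q') 0
  have h2 : |(y - q) - (y - q')| = |q - q'| := by
    rw [show (y - q) - (y - q') = -(q - q') by ring, abs_neg]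
  rw [h2] at h
  exact h

lemma pc_cont (q : ℝ) : Continuous (pc q) :=
  (continuous_id.sub continuous_const).max continuous_const

lemma pc_convex (q : ℝ) : ConvexOn ℝ univ (pc q) := by
  have h1 : ConvexOn ℝ univ (fun y : ℝ => y - q) :=
    (convexOn_id convex_univ).sub (concaveOn_const q convex_univ)
  have h2 := h1.sup (convexOn_const (0:ℝ) convex_univ)
  exact h2

/-- Hat function of half-width `h` centered at `a`, as a combination of calls. -/
def lam (h a y : ℝ) : ℝ := (pc (a - h) y - 2 * pc a y + pc (a + h) y) / h

lemma lam_nonneg {h : ℝ} (hh : 0 < h) (a y : ℝ) : 0 ≤ lam h a y := by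
  apply div_nonneg _ hh.le
  rcases le_total y a with hy | hy
  · rw [pc_of_le hy, pc_of_le (show y ≤ a + h by linarith)]
    have := pc_nonneg (a - h) y
    linarith
  · rw [pc_of_ge (show a - h ≤ y by linarith), pc_of_ge hy]
    rcases le_total y (a + h) with hy2 | hy2
    · rw [pc_of_le hy2]; linarith
    · rw [pc_of_ge hy2]; linarith

lemma lam_eq_zero {h a y : ℝ} (hh : 0 < h) (hd : h ≤ |y - a|) : lam h a y = 0 := by
  rcases le_abs.mp hd with h1 | h1
  · rw [lam, pc_of_ge (show a - h ≤ y by linarith), pc_of_ge (show a ≤ y by linarith),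
      pc_of_ge (show a + h ≤ y by linarith)]
    ring_nf
  · rw [lam, pc_of_le (show y ≤ a - h by linarith), pc_of_le (show y ≤ a by linarith),
      pc_of_le (show y ≤ a + h by linarith)]
    ring_nf

end ConvexOrderFamilyAux

open ConvexOrderFamilyAux

/-- a family `(μ_s)_{s ∈ [0,1]}` of probability measures with finite first
moments which is nondecreasing in convex order is weakly continuous at all but at most
countably many points of `[0,1]`. -/
theorem convex_order_family_ae_continuous
    (μ : ℝ → Measure ℝ)
    (hprob : ∀ s ∈ Icc (0:ℝ) 1, IsProbabilityMeasure (μ s))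
    (hmom : ∀ s ∈ Icc (0:ℝ) 1, Integrable (fun y => y) (μ s))
    (hconv : ∀ φ : ℝ → ℝ, ConvexOn ℝ univ φ → ∀ s t : ℝ,
      s ∈ Icc (0:ℝ) 1 → t ∈ Icc (0:ℝ) 1 → s ≤ t →
      Integrable φ (μ s) → Integrable φ (μ t) →
      (∫ y, φ y ∂(μ s)) ≤ ∫ y, φ y ∂(μ t)) :
    ∃ T : Set ℝ, T.Countable ∧
      ∀ s ∈ Icc (0:ℝ) 1, s ∉ T →
        ∀ g : BoundedContinuousFunction ℝ ℝ,
          ContinuousWithinAt (fun r => ∫ y, g y ∂(μ r)) (Icc 0 1) s := by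
  classical
  have h11 : (1:ℝ) ∈ Icc (0:ℝ) 1 := ⟨zero_le_one, le_refl 1⟩
  -- integrability of calls
  have intpc : ∀ (q : ℝ), ∀ r ∈ Icc (0:ℝ) 1, Integrable (fun y => pc q y) (μ r) := by
    intro q r hr
    haveI := hprob r hr
    refine Integrable.mono' (((hmom r hr).abs).add (integrable_const |q|))
      ((pc_cont q).aestronglyMeasurable) ?_
    filter_upwards with y
    rw [Real.norm_eq_abs, abs_of_nonneg (pc_nonneg q y)]
    exact pc_le q y
  set C : ℝ → ℝ → ℝ := fun r q => ∫ y, pc q y ∂ μ r with hCdef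
  have Cmono : ∀ q : ℝ, MonotoneOn (fun r => C r q) (Icc (0:ℝ) 1) := by
    intro q r hr t ht hrt
    exact hconv (pc q) (pc_convex q) r t hr ht hrt (intpc q r hr) (intpc q t ht)
  have Clip : ∀ r ∈ Icc (0:ℝ) 1, ∀ q q' : ℝ, |C r q - C r q'| ≤ |q - q'| := by
    intro r hr q q'
    haveI := hprob r hr
    have h1 : C r q - C r q' = ∫ y, (pc q y - pc q' y) ∂ μ r :=
      (integral_sub (intpc q r hr) (intpc q' r hr)).symm
    rw [h1]
    calc |∫ y, (pc q y - pc q' y) ∂ μ r| ≤ ∫ y, |pc q y - pc q' y| ∂ μ r := by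
          simpa [Real.norm_eq_abs] using
            norm_integral_le_integral_norm (μ := μ r) (fun y => pc q y - pc q' y)
      _ ≤ ∫ _y, |q - q'| ∂ μ r :=
          integral_mono ((intpc q r hr).sub (intpc q' r hr)).abs (integrable_const _)
            (fun y => pc_lip q q' y)
      _ = |q - q'| := by simp
  -- projection onto [0,1]
  set π : ℝ → ℝ := fun r => max 0 (min r 1) with hπdef
  have πmem : ∀ r, π r ∈ Icc (0:ℝ) 1 :=
    fun r => ⟨le_max_left _ _, max_le zero_le_one (min_le_right _ _)⟩
  have πid : ∀ r ∈ Icc (0:ℝ) 1, π r = r := by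
    intro r hr
    rw [hπdef]
    simp only
    rw [min_eq_left hr.2, max_eq_right hr.1]
  have πmono : Monotone π := fun a b hab =>
    max_le_max le_rfl (min_le_min hab le_rfl)
  refine ⟨⋃ q : ℚ, {r : ℝ | ¬ ContinuousAt (fun u => C (π u) (q:ℝ)) r}, ?_, ?_⟩
  · refine countable_iUnion fun q => ?_
    have hmono : Monotone (fun u => C (π u) (q:ℝ)) :=
      fun a b hab => Cmono (q:ℝ) (πmem a) (πmem b) (πmono hab)
    exact hmono.countable_not_continuousAt
  intro s hs hsT g
  -- convergence of call integrals at rational strikes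
  have hCq : ∀ q : ℚ, Tendsto (fun r => C r (q:ℝ)) (nhdsWithin s (Icc (0:ℝ) 1)) (nhds (C s (q:ℝ))) := by
    intro q
    have h1 : ContinuousAt (fun u => C (π u) (q:ℝ)) s := by
      by_contra hcon
      exact hsT (mem_iUnion.2 ⟨q, hcon⟩)
    have h2 : ContinuousWithinAt (fun r => C r (q:ℝ)) (Icc (0:ℝ) 1) s :=
      (h1.continuousWithinAt).congr (fun r hr => by rw [πid r hr]) (by rw [πid s hs])
    exact h2
  -- convergence of call integrals at all real strikes
  have hCx : ∀ x : ℝ, Tendsto (fun r => C r x) (nhdsWithin s (Icc (0:ℝ) 1)) (nhds (C s x)) := by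
    intro x
    rw [Metric.tendsto_nhds]
    intro ε hε
    obtain ⟨q, hq⟩ := exists_rat_near x (by positivity : (0:ℝ) < ε/3)
    have h1 := (Metric.tendsto_nhds.mp (hCq q)) (ε/3) (by positivity)
    filter_upwards [h1, self_mem_nhdsWithin] with r hr1 hr2
    have e1 : |C r x - C r (q:ℝ)| ≤ |x - (q:ℝ)| := Clip r hr2 x (q:ℝ)
    have e2 : |C s x - C s (q:ℝ)| ≤ |x - (q:ℝ)| := Clip s hs x (q:ℝ)
    rw [Real.dist_eq] at hr1 ⊢
    have t1 : |C r x - C s x| ≤ |C r x - C r (q:ℝ)| + |C r (q:ℝ) - C s (q:ℝ)|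
        + |C s (q:ℝ) - C s x| := by
      have u1 := abs_sub_le (C r x) (C r (q:ℝ)) (C s x)
      have u2 := abs_sub_le (C r (q:ℝ)) (C s (q:ℝ)) (C s x)
      linarith
    have e2' : |C s (q:ℝ) - C s x| = |C s x - C s (q:ℝ)| := abs_sub_comm _ _
    linarith
  -- uniform moment bound
  set Mo : ℝ := ∫ y, |y| ∂ μ 1 with hMo
  have habsconv : ConvexOn ℝ univ (fun y : ℝ => |y|) := by
    exact (convexOn_univ_norm (E := ℝ))
  have hM : ∀ r ∈ Icc (0:ℝ) 1, ∫ y, |y| ∂ μ r ≤ Mo := by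
    intro r hr
    exact hconv (fun y => |y|) habsconv r 1 hr h11 hr.2 (hmom r hr).abs (hmom 1 h11).abs
  have hMo0 : 0 ≤ Mo := integral_nonneg fun y => abs_nonneg y
  -- main continuity claim
  show Tendsto (fun r => ∫ y, g y ∂ μ r) (nhdsWithin s (Icc (0:ℝ) 1)) (nhds (∫ y, g y ∂ μ s))
  rw [Metric.tendsto_nhds]
  intro ε₀ hε₀
  set ε : ℝ := ε₀ / 6 with hεdef
  have hε : 0 < ε := by positivity
  set K : ℝ := ‖g‖ with hKdef
  have hK0 : 0 ≤ K := norm_nonneg g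
  have hKb : ∀ y : ℝ, |g y| ≤ K := by
    intro y
    simpa [Real.norm_eq_abs] using g.norm_coe_le_norm y
  set R : ℝ := max 1 (2 * K * Mo / ε + 1) with hRdef
  have hR1 : (1:ℝ) ≤ R := le_max_left _ _
  have hR0 : 0 < R := lt_of_lt_of_le one_pos hR1
  have hKM : 2 * K * Mo ≤ ε * R := by
    have h1 : 2 * K * Mo / ε + 1 ≤ R := le_max_right _ _
    have h2 : ε * (2 * K * Mo / ε + 1) = 2 * K * Mo + ε := by
      field_simp
    nlinarith [mul_le_mul_of_nonneg_left h1 hε.le]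
  -- uniform continuity on [-R, R]
  have hucont : UniformContinuousOn g (Icc (-R) R) :=
    isCompact_Icc.uniformContinuousOn_of_continuous g.continuous.continuousOn
  obtain ⟨δ, hδ0, hδ⟩ := Metric.uniformContinuousOn_iff.mp hucont ε hε
  obtain ⟨n, hn⟩ := exists_nat_ge (2 * R / δ)
  set N : ℕ := n + 1 with hNdef
  have hNpos : 0 < (N:ℝ) := by positivity
  set st : ℝ := 2 * R / N with hstdef
  have hst0 : 0 < st := by positivity
  have hstδ : st ≤ δ := by
    rw [hstdef, div_le_iff₀ hNpos]
    have h1 : 2 * R / δ ≤ (N:ℝ) := le_trans hn (by exact_mod_cast Nat.le_succ n)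
    calc 2 * R = δ * (2 * R / δ) := by field_simp
      _ ≤ δ * (N:ℝ) := by nlinarith
      _ = δ * (N:ℝ) := rfl
  set x : ℕ → ℝ := fun i => -R + i * st with hxdef
  have hxsucc : ∀ i : ℕ, x (i+1) = x i + st := by
    intro i
    rw [hxdef]
    push_cast
    ring
  have hxN : x N = R := by
    have hNst : (N:ℝ) * (2 * R / N) = 2 * R := by field_simp
    show -R + (N:ℝ) * st = R
    rw [hstdef, hNst]
    ring
  have hxmem : ∀ i : ℕ, i ≤ N → x i ∈ Icc (-R) R := by
    intro i hi
    constructor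
    · have h0 : (0:ℝ) ≤ (i:ℝ) * st := by positivity
      have hxi : x i = -R + i * st := rfl
      rw [hxi]
      linarith
    · have h1 : (i:ℝ) * st ≤ (N:ℝ) * st :=
        mul_le_mul_of_nonneg_right (by exact_mod_cast hi) hst0.le
      have h2 : x i ≤ x N := by
        rw [hxdef]
        simp only
        linarith
      rw [hxN] at h2
      exact h2
  -- the piecewise-linear approximation
  set p : ℝ → ℝ := fun y => ∑ i ∈ Finset.range (N+1), g (x i) * lam st (x i) y with hpdef
  -- telescoping sum of hats
  have htel : ∀ y : ℝ, ∑ i ∈ Finset.range (N+1), lam st (x i) y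
      = ((pc (x (N+1)) y - pc (x (N+1) - st) y) - (pc (x 0) y - pc (x 0 - st) y)) / st := by
    intro y
    have h1 : ∀ i ∈ Finset.range (N+1), lam st (x i) y
        = ((fun j => pc (x j) y - pc (x j - st) y) (i+1)
          - (fun j => pc (x j) y - pc (x j - st) y) i) / st := by
      intro i _
      simp only
      rw [hxsucc i, show x i + st - st = x i from by ring, lam]
      ring
    rw [Finset.sum_congr rfl h1, ← Finset.sum_div,
      Finset.sum_range_sub (fun j => pc (x j) y - pc (x j - st) y) (N+1)]
  have hsum_le : ∀ y : ℝ, ∑ i ∈ Finset.range (N+1), lam st (x i) y ≤ 1 := by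
    intro y
    rw [htel y]
    rw [div_le_one hst0]
    have h1 : pc (x (N+1)) y ≤ pc (x (N+1) - st) y := pc_anti (by linarith) y
    have h2 : |pc (x 0) y - pc (x 0 - st) y| ≤ |x 0 - (x 0 - st)| := pc_lip _ _ y
    rw [show x 0 - (x 0 - st) = st from by ring, abs_of_pos hst0] at h2
    have h3 := abs_le.mp h2
    linarith [h3.1]
  have hsum_eq : ∀ y ∈ Icc (-R) R, ∑ i ∈ Finset.range (N+1), lam st (x i) y = 1 := by
    intro y hy
    rw [htel y]
    have hy1 : y ≤ x (N+1) - st := by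
      rw [hxsucc N, hxN]; simpa using hy.2
    have e1 : pc (x (N+1)) y = 0 := pc_of_le (by linarith)
    have e2 : pc (x (N+1) - st) y = 0 := pc_of_le hy1
    have hx0 : x 0 = -R := by simp [hxdef]
    have e3 : pc (x 0) y = y + R := by
      rw [pc_of_ge (by rw [hx0]; exact hy.1), hx0]; ring
    have e4 : pc (x 0 - st) y = y + R + st := by
      rw [pc_of_ge (by rw [hx0]; linarith [hy.1]), hx0]; ring
    rw [e1, e2, e3, e4]
    field_simp
    ring
  have hsum_nonneg : ∀ y : ℝ, 0 ≤ ∑ i ∈ Finset.range (N+1), lam st (x i) y :=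
    fun y => Finset.sum_nonneg fun i _ => lam_nonneg hst0 (x i) y
  -- |p| ≤ K everywhere
  have hpK : ∀ y : ℝ, |p y| ≤ K := by
    intro y
    rw [hpdef]
    calc |∑ i ∈ Finset.range (N+1), g (x i) * lam st (x i) y|
        ≤ ∑ i ∈ Finset.range (N+1), |g (x i) * lam st (x i) y| :=
          Finset.abs_sum_le_sum_abs _ _
      _ ≤ ∑ i ∈ Finset.range (N+1), K * lam st (x i) y := by
          refine Finset.sum_le_sum fun i _ => ?_
          rw [abs_mul, abs_of_nonneg (lam_nonneg hst0 _ _)]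
          exact mul_le_mul_of_nonneg_right (hKb _) (lam_nonneg hst0 _ _)
      _ = K * ∑ i ∈ Finset.range (N+1), lam st (x i) y := by rw [Finset.mul_sum]
      _ ≤ K * 1 := mul_le_mul_of_nonneg_left (hsum_le y) hK0
      _ = K := mul_one K
  -- |p - g| ≤ ε on [-R, R]
  have hperr : ∀ y ∈ Icc (-R) R, |p y - g y| ≤ ε := by
    intro y hy
    have h1 : p y - g y = ∑ i ∈ Finset.range (N+1), (g (x i) - g y) * lam st (x i) y := by
      have e : (g y : ℝ) = g y * ∑ i ∈ Finset.range (N+1), lam st (x i) y := by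
        rw [hsum_eq y hy, mul_one]
      calc p y - g y = (∑ i ∈ Finset.range (N+1), g (x i) * lam st (x i) y)
            - g y * ∑ i ∈ Finset.range (N+1), lam st (x i) y := by
            rw [hpdef, ← e]
        _ = ∑ i ∈ Finset.range (N+1), (g (x i) - g y) * lam st (x i) y := by
            rw [Finset.mul_sum, ← Finset.sum_sub_distrib]
            exact Finset.sum_congr rfl fun i _ => by ring
    rw [h1]
    calc |∑ i ∈ Finset.range (N+1), (g (x i) - g y) * lam st (x i) y|
        ≤ ∑ i ∈ Finset.range (N+1), |(g (x i) - g y) * lam st (x i) y| :=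
          Finset.abs_sum_le_sum_abs _ _
      _ ≤ ∑ i ∈ Finset.range (N+1), ε * lam st (x i) y := by
          refine Finset.sum_le_sum fun i hi => ?_
          rw [abs_mul, abs_of_nonneg (lam_nonneg hst0 _ _)]
          by_cases hz : st ≤ |y - x i|
          · rw [lam_eq_zero hst0 hz]
            simp
          · push_neg at hz
            have hiN : i ≤ N := Nat.lt_succ_iff.mp (Finset.mem_range.mp hi)
            have hd : dist (x i) y < δ := by
              rw [Real.dist_eq, abs_sub_comm]
              exact lt_of_lt_of_le hz hstδ
            have := hδ (x i) (hxmem i hiN) y hy hd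
            rw [Real.dist_eq] at this
            exact mul_le_mul_of_nonneg_right this.le (lam_nonneg hst0 _ _)
      _ = ε * ∑ i ∈ Finset.range (N+1), lam st (x i) y := by rw [Finset.mul_sum]
      _ = ε * 1 := by rw [hsum_eq y hy]
      _ = ε := mul_one ε
  -- global pointwise bound
  have hpg : ∀ y : ℝ, |g y - p y| ≤ ε + (2*K/R) * |y| := by
    intro y
    by_cases hy : y ∈ Icc (-R) R
    · have h1 := hperr y hy
      rw [abs_sub_comm] at h1
      have h2 : 0 ≤ (2*K/R) * |y| := by positivity
      linarith
    · have hRy : R ≤ |y| := by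
        rw [mem_Icc] at hy
        push_neg at hy
        rcases le_or_gt (-R) y with h | h
        · exact le_trans (hy h).le (le_abs_self y)
        · calc R ≤ -y := by linarith
            _ ≤ |y| := neg_le_abs y
      have h1 : |g y - p y| ≤ 2 * K := by
        calc |g y - p y| ≤ |g y| + |p y| := abs_sub _ _
          _ ≤ K + K := add_le_add (hKb y) (hpK y)
          _ = 2 * K := by ring
      have h2 : 2 * K ≤ (2*K/R) * |y| := by
        rw [div_mul_eq_mul_div, le_div_iff₀ hR0]
        nlinarith
      linarith
  -- integrability of hats and p
  have intlam : ∀ (a : ℝ), ∀ r ∈ Icc (0:ℝ) 1, Integrable (fun y => lam st a y) (μ r) := by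
    intro a r hr
    exact (((intpc (a - st) r hr).sub ((intpc a r hr).const_mul 2)).add
      (intpc (a + st) r hr)).div_const st
  have intp : ∀ r ∈ Icc (0:ℝ) 1, Integrable p (μ r) := by
    intro r hr
    rw [hpdef]
    exact integrable_finset_sum _ fun i _ => (intlam (x i) r hr).const_mul _
  -- integral of p in terms of C
  have hInt : ∀ r ∈ Icc (0:ℝ) 1, ∫ y, p y ∂ μ r
      = ∑ i ∈ Finset.range (N+1),
          g (x i) * ((C r (x i - st) - 2 * C r (x i) + C r (x i + st)) / st) := by
    intro r hr
    rw [hpdef]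
    rw [integral_finset_sum _ (fun i _ => (intlam (x i) r hr).const_mul _)]
    refine Finset.sum_congr rfl fun i _ => ?_
    rw [integral_const_mul]
    congr 1
    rw [show (fun y => lam st (x i) y)
        = fun y => (pc (x i - st) y - 2 * pc (x i) y + pc (x i + st) y) / st from rfl]
    rw [integral_div]
    congr 1
    have i1 : Integrable (fun y => pc (x i - st) y - 2 * pc (x i) y) (μ r) :=
      (intpc _ r hr).sub ((intpc _ r hr).const_mul 2)
    have e1 : ∫ y, (pc (x i - st) y - 2 * pc (x i) y + pc (x i + st) y) ∂ μ r
        = (∫ y, (pc (x i - st) y - 2 * pc (x i) y) ∂ μ r) + ∫ y, pc (x i + st) y ∂ μ r :=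
      integral_add i1 (intpc _ r hr)
    have e2 : ∫ y, (pc (x i - st) y - 2 * pc (x i) y) ∂ μ r
        = (∫ y, pc (x i - st) y ∂ μ r) - ∫ y, 2 * pc (x i) y ∂ μ r :=
      integral_sub (intpc _ r hr) ((intpc _ r hr).const_mul 2)
    rw [e1, e2, integral_const_mul]
  -- convergence of ∫ p
  have hptend : Tendsto (fun r => ∫ y, p y ∂ μ r) (nhdsWithin s (Icc (0:ℝ) 1))
      (nhds (∫ y, p y ∂ μ s)) := by
    have h1 : Tendsto (fun r => ∑ i ∈ Finset.range (N+1),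
        g (x i) * ((C r (x i - st) - 2 * C r (x i) + C r (x i + st)) / st))
        (nhdsWithin s (Icc (0:ℝ) 1))
        (nhds (∑ i ∈ Finset.range (N+1),
          g (x i) * ((C s (x i - st) - 2 * C s (x i) + C s (x i + st)) / st))) := by
      refine tendsto_finset_sum _ fun i _ => ?_
      exact ((((hCx _).sub ((hCx _).const_mul 2)).add (hCx _)).div_const st).const_mul _
    rw [hInt s hs]
    refine h1.congr' ?_
    filter_upwards [self_mem_nhdsWithin] with r hr
    exact (hInt r hr).symm
  -- integral comparison estimate
  have hest : ∀ r ∈ Icc (0:ℝ) 1, |(∫ y, g y ∂ μ r) - ∫ y, p y ∂ μ r| ≤ 2 * ε := by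
    intro r hr
    haveI := hprob r hr
    have hgint : Integrable (fun y => g y) (μ r) := g.integrable (μ r)
    rw [← integral_sub hgint (intp r hr)]
    have h1 : |∫ y, (g y - p y) ∂ μ r| ≤ ∫ y, |g y - p y| ∂ μ r := by
      simpa [Real.norm_eq_abs] using
        norm_integral_le_integral_norm (μ := μ r) (fun y => g y - p y)
    have h2 : ∫ y, |g y - p y| ∂ μ r ≤ ∫ y, (ε + (2*K/R) * |y|) ∂ μ r :=
      integral_mono (hgint.sub (intp r hr)).abs
        ((integrable_const ε).add (((hmom r hr).abs).const_mul _)) (fun y => hpg y)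
    have h3 : ∫ y, (ε + (2*K/R) * |y|) ∂ μ r = ε + (2*K/R) * ∫ y, |y| ∂ μ r := by
      rw [integral_add (integrable_const ε) (((hmom r hr).abs).const_mul _),
        integral_const, integral_const_mul]
      simp
    have h4 : (2*K/R) * (∫ y, |y| ∂ μ r) ≤ ε := by
      have h5 : (2*K/R) * (∫ y, |y| ∂ μ r) ≤ (2*K/R) * Mo :=
        mul_le_mul_of_nonneg_left (hM r hr) (by positivity)
      have h6 : (2*K/R) * Mo ≤ ε := by
        rw [div_mul_eq_mul_div, div_le_iff₀ hR0]
        nlinarith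
      linarith
    linarith
  -- final assembly
  have hps := (Metric.tendsto_nhds.mp hptend) ε hε
  filter_upwards [hps, self_mem_nhdsWithin] with r hr1 hr2
  rw [Real.dist_eq] at hr1 ⊢
  have e1 := hest r hr2
  have e2 := hest s hs
  have t1 : |(∫ y, g y ∂ μ r) - ∫ y, g y ∂ μ s|
      ≤ |(∫ y, g y ∂ μ r) - ∫ y, p y ∂ μ r| + |(∫ y, p y ∂ μ r) - ∫ y, p y ∂ μ s|
        + |(∫ y, p y ∂ μ s) - ∫ y, g y ∂ μ s| := by
    have u1 := abs_sub_le (∫ y, g y ∂ μ r) (∫ y, p y ∂ μ r) (∫ y, g y ∂ μ s)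
    have u2 := abs_sub_le (∫ y, p y ∂ μ r) (∫ y, p y ∂ μ s) (∫ y, g y ∂ μ s)
    linarith
  have e2' : |(∫ y, p y ∂ μ s) - ∫ y, g y ∂ μ s| = |(∫ y, g y ∂ μ s) - ∫ y, p y ∂ μ s| :=
    abs_sub_comm _ _
  have hεε : 5 * ε < ε₀ := by rw [hεdef]; linarith
  linarith
end
end
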